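/- Let X, Y be Banach spaces, f : X → Y strictly differentiable at x̄ with Df(x̄) surjective, κ ≥ reg Df(x̄), and μ ≥ 0 with κμ < 1 such that ‖f(x) − f(x') − Df(x̄)(x − x')‖ ≤ μ‖x − x'‖ for all x, x' in B_ε(x̄). Let c = κ⁻¹ − μ and fix 0 < τ < ε. Then there exist neighborhoods U of x̄ and V of ȳ = f(x̄) such that B_τ(x) ⊆ B_ε(x̄) for all x ∈ U, ‖y − f(x)‖ ≤ cτ for all x ∈ U, y ∈ V (after shrinking), and the metric regularity estimate d(x, f⁻¹(y)) ≤ (κ/(1 − κμ)) ‖y − f(x)‖ holds for all (x,y) ∈ U × V. -/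

import Mathlib

theorem stmt17 {X Y : Type*} [NormedAddCommGroup X] [NormedSpace ℝ X] [CompleteSpace X]
    [NormedAddCommGroup Y] [NormedSpace ℝ Y] [CompleteSpace Y]
    (f : X → Y) (x₀ : X) (A : X →L[ℝ] Y)
    (hstrict : HasStrictFDerivAt f A x₀) (hA : Function.Surjective A)
    (κ : ℝ) (hκpos : 0 < κ)
    (hreg : ∀ y : Y, ‖y‖ ≤ 1 → Metric.infDist (0 : X) {x | A x = y} ≤ κ)
    (μ ε τ : ℝ) (hμ : 0 ≤ μ) (hκμ : κ * μ < 1)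
    (hε : 0 < ε) (hτ0 : 0 < τ) (hτε : τ < ε)
    (hlip : ∀ x ∈ Metric.closedBall x₀ ε, ∀ x' ∈ Metric.closedBall x₀ ε,
      ‖f x - f x' - A (x - x')‖ ≤ μ * ‖x - x'‖) :
    ∃ U ∈ nhds x₀, ∃ V ∈ nhds (f x₀),
      (∀ x ∈ U, Metric.closedBall x τ ⊆ Metric.closedBall x₀ ε) ∧
      (∀ x ∈ U, ∀ y ∈ V, ‖y - f x‖ ≤ (κ⁻¹ - μ) * τ) ∧
      (∀ x ∈ U, ∀ y ∈ V,
        Metric.infDist x {x' | f x' = y} ≤ (κ / (1 - κ * μ)) * ‖y - f x‖) := by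
  have hμκ : μ < κ⁻¹ := by
    have h1 : κ * μ < κ * κ⁻¹ := by rw [mul_inv_cancel₀ hκpos.ne']; exact hκμ
    exact lt_of_mul_lt_mul_left h1 hκpos.le
  set c : ℝ := κ⁻¹ - μ with hc_def
  have hc : 0 < c := by simp [hc_def]; linarith
  -- right inverse with norm ≤ κ + δ
  have hri : ∀ δ : ℝ, 0 < δ → ∀ y : Y, ∃ x : X, A x = y ∧ ‖x‖ ≤ (κ + δ) * ‖y‖ := by
    intro δ hδ y
    by_cases hy : y = 0
    · exact ⟨0, by simp [hy], by simp [hy]⟩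
    · have hny : (0:ℝ) < ‖y‖ := norm_pos_iff.mpr hy
      set y' : Y := ‖y‖⁻¹ • y with hy'_def
      have hny' : ‖y'‖ ≤ 1 := by
        rw [hy'_def, norm_smul, norm_inv, norm_norm, inv_mul_cancel₀ hny.ne']
      have hne : {x : X | A x = y'}.Nonempty := hA y'
      have hlt : Metric.infDist (0 : X) {x | A x = y'} < κ + δ :=
        lt_of_le_of_lt (hreg y' hny') (by linarith)
      obtain ⟨x', hx', hdx'⟩ := (Metric.infDist_lt_iff hne).mp hlt
      rw [dist_zero_left] at hdx'
      refine ⟨‖y‖ • x', ?_, ?_⟩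
      · rw [map_smul, hx', hy'_def, smul_inv_smul₀ hny.ne']
      · rw [norm_smul, norm_norm]
        calc ‖y‖ * ‖x'‖ ≤ ‖y‖ * (κ + δ) := by
              exact mul_le_mul_of_nonneg_left hdx'.le hny.le
          _ = (κ + δ) * ‖y‖ := mul_comm _ _
  have happ : ApproximatesLinearOn f A (Metric.closedBall x₀ ε) μ.toNNReal := by
    intro x hx x' hx'
    rw [Real.coe_toNNReal μ hμ]
    exact hlip x hx x' hx'
  -- the neighborhoods
  set M : ℝ := ‖A‖ + μ + 1 with hM_def
  have hM : 0 < M := by positivity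
  set r : ℝ := min ((ε - τ)/2) (c * τ / (2 * M)) with hr_def
  have hr0 : 0 < r := by
    apply lt_min (by linarith) (by positivity)
  have hbound : ∀ x, dist x x₀ < r → ∀ y, dist y (f x₀) < c * τ / 2 → ‖y - f x‖ ≤ c * τ := by
    intro x hx y hy
    have hxball : x ∈ Metric.closedBall x₀ ε := by
      rw [Metric.mem_closedBall]
      have : r ≤ (ε - τ)/2 := min_le_left _ _
      linarith [hx]
    have h0ball : x₀ ∈ Metric.closedBall x₀ ε := Metric.mem_closedBall_self hε.le
    have hfd : ‖f x₀ - f x‖ ≤ (‖A‖ + μ) * ‖x₀ - x‖ := by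
      calc ‖f x₀ - f x‖ = ‖(f x₀ - f x - A (x₀ - x)) + A (x₀ - x)‖ := by congr 1; abel
        _ ≤ ‖f x₀ - f x - A (x₀ - x)‖ + ‖A (x₀ - x)‖ := norm_add_le _ _
        _ ≤ μ * ‖x₀ - x‖ + ‖A‖ * ‖x₀ - x‖ :=
            add_le_add (hlip x₀ h0ball x hxball) (A.le_opNorm _)
        _ = (‖A‖ + μ) * ‖x₀ - x‖ := by ring
    have hxx : ‖x₀ - x‖ < r := by rw [← dist_eq_norm, dist_comm]; exact hx
    have hr2 : r ≤ c * τ / (2 * M) := min_le_right _ _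
    have hAnn : 0 ≤ ‖A‖ + μ := by positivity
    have h3 : (‖A‖ + μ) * ‖x₀ - x‖ ≤ M * (c * τ / (2 * M)) := by
      apply mul_le_mul (by simp only [hM_def]; linarith) (le_trans hxx.le hr2) (norm_nonneg _) hM.le
    have h4 : M * (c * τ / (2 * M)) = c * τ / 2 := by field_simp
    have hyd : ‖y - f x₀‖ < c * τ / 2 := by rw [← dist_eq_norm]; exact hy
    calc ‖y - f x‖ = ‖(y - f x₀) + (f x₀ - f x)‖ := by congr 1; abel
      _ ≤ ‖y - f x₀‖ + ‖f x₀ - f x‖ := norm_add_le _ _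
      _ ≤ c * τ / 2 + c * τ / 2 := by
          refine add_le_add hyd.le (le_trans hfd (by rw [← h4] at *; exact h3))
      _ = c * τ := by ring
  refine ⟨Metric.ball x₀ r, Metric.ball_mem_nhds _ hr0,
    Metric.ball (f x₀) (c * τ / 2), Metric.ball_mem_nhds _ (by positivity), ?_, ?_, ?_⟩
  · -- ball inclusion
    intro x hx z hz
    rw [Metric.mem_ball] at hx
    rw [Metric.mem_closedBall] at hz ⊢
    have h1 : r ≤ (ε - τ)/2 := min_le_left _ _
    calc dist z x₀ ≤ dist z x + dist x x₀ := dist_triangle _ _ _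
      _ ≤ τ + r := add_le_add hz hx.le
      _ ≤ ε := by linarith
  · -- norm bound
    intro x hx y hy
    rw [Metric.mem_ball] at hx hy
    exact hbound x hx y hy
  · -- metric regularity
    intro x hx y hy
    rw [Metric.mem_ball] at hx hy
    have hd : ‖y - f x‖ ≤ c * τ := hbound x hx y hy
    set c'' : ℝ := 2 * c * τ / (ε + τ) with hc''_def
    have hc''pos : 0 < c'' := by positivity
    have hc''lt : c'' < c := by
      rw [hc''_def, div_lt_iff₀ (by linarith)]
      nlinarith
    have hμc'' : μ + c'' < κ⁻¹ := by
      have h := hc''lt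
      rw [hc_def] at h
      linarith
    have hμc''pos : 0 < μ + c'' := by linarith
    have hκinv : κ < (μ + c'')⁻¹ := by
      have h1 : κ * (μ + c'') < 1 := by
        calc κ * (μ + c'') < κ * κ⁻¹ := by
              exact mul_lt_mul_of_pos_left hμc'' hκpos
          _ = 1 := mul_inv_cancel₀ hκpos.ne'
      have := (lt_div_iff₀ hμc''pos).mpr h1
      rwa [one_div] at this
    set δ₀ : ℝ := (μ + c'')⁻¹ - κ with hδ₀_def
    have hδ₀pos : 0 < δ₀ := by simp only [hδ₀_def]; linarith
    have key : ∀ δ : ℝ, 0 < δ → δ ≤ δ₀ →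
        Metric.infDist x {x' | f x' = y} ≤ ‖y - f x‖ / ((κ + δ)⁻¹ - μ) := by
      intro δ hδ hδδ₀
      have hκδ : 0 < κ + δ := by linarith
      have hinv : μ + c'' ≤ (κ + δ)⁻¹ := by
        have h1 : κ + δ ≤ (μ + c'')⁻¹ := by
          simp only [hδ₀_def] at hδδ₀; linarith
        calc μ + c'' = ((μ + c'')⁻¹)⁻¹ := (inv_inv _).symm
          _ ≤ (κ + δ)⁻¹ := by
              apply inv_anti₀ hκδ h1
      set cδ : ℝ := (κ + δ)⁻¹ - μ with hcδ_def
      have hcδpos : 0 < cδ := by simp only [hcδ_def]; linarith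
      have hcδc'' : c'' ≤ cδ := by simp only [hcδ_def]; linarith
      set ρ : ℝ := ‖y - f x‖ / cδ with hρ_def
      have hρ0 : 0 ≤ ρ := div_nonneg (norm_nonneg _) hcδpos.le
      have hρle : ρ ≤ (ε + τ) / 2 := by
        have h1 : ρ ≤ (c * τ) / c'' := div_le_div₀ (by positivity) hd hc''pos hcδc''
        have h2 : (c * τ) / c'' = (ε + τ) / 2 := by
          rw [hc''_def]
          field_simp
        linarith
      have hsub : Metric.closedBall x ρ ⊆ Metric.closedBall x₀ ε := by
        intro z hz
        rw [Metric.mem_closedBall] at hz ⊢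
        have h1 : r ≤ (ε - τ)/2 := min_le_left _ _
        calc dist z x₀ ≤ dist z x + dist x x₀ := dist_triangle _ _ _
          _ ≤ ρ + r := add_le_add hz hx.le
          _ ≤ (ε + τ)/2 + (ε - τ)/2 := add_le_add hρle h1
          _ = ε := by ring
      let g : A.NonlinearRightInverse :=
        { toFun := fun y => (hri δ hδ y).choose
          nnnorm := ⟨κ + δ, hκδ.le⟩
          bound' := fun y => by exact (hri δ hδ y).choose_spec.2
          right_inv' := fun y => (hri δ hδ y).choose_spec.1 }
      have hsurj := happ.surjOn_closedBall_of_nonlinearRightInverse g hρ0 hsub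
      have hymem : y ∈ Metric.closedBall (f x) (((g.nnnorm : ℝ)⁻¹ - (μ.toNNReal : ℝ)) * ρ) := by
        rw [Metric.mem_closedBall, dist_eq_norm]
        have hradius : ((g.nnnorm : ℝ)⁻¹ - (μ.toNNReal : ℝ)) * ρ = ‖y - f x‖ := by
          have hgn : (g.nnnorm : ℝ) = κ + δ := rfl
          rw [hgn, Real.coe_toNNReal μ hμ, hρ_def, ← hcδ_def]
          field_simp
        rw [hradius]
      obtain ⟨z, hzball, hfz⟩ := hsurj hymem
      calc Metric.infDist x {x' | f x' = y} ≤ dist x z :=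
            Metric.infDist_le_dist_of_mem hfz
        _ ≤ ρ := by rw [dist_comm]; exact Metric.mem_closedBall.mp hzball
    have hcont : Filter.Tendsto (fun δ : ℝ => ‖y - f x‖ / ((κ + δ)⁻¹ - μ))
        (nhdsWithin 0 (Set.Ioi 0)) (nhds (‖y - f x‖ / (κ⁻¹ - μ))) := by
      have h1 : ContinuousAt (fun δ : ℝ => ‖y - f x‖ / ((κ + δ)⁻¹ - μ)) 0 := by
        have hA1 : ContinuousAt (fun δ : ℝ => (κ + δ)⁻¹ - μ) 0 :=
          (((continuousAt_const.add continuousAt_id).inv₀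
            (by simpa using hκpos.ne')).sub continuousAt_const)
        exact ContinuousAt.div continuousAt_const hA1 (by simpa using hc.ne')
      have h2 := h1.continuousWithinAt (s := Set.Ioi 0)
      simpa using h2.tendsto
    have hev : ∀ᶠ δ in nhdsWithin 0 (Set.Ioi 0),
        Metric.infDist x {x' | f x' = y} ≤ ‖y - f x‖ / ((κ + δ)⁻¹ - μ) := by
      filter_upwards [Ioc_mem_nhdsGT_of_mem ⟨le_refl (0:ℝ), hδ₀pos⟩] with δ hδ
      exact key δ hδ.1 hδ.2
    have hlim := ge_of_tendsto hcont hev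
    have heq : ‖y - f x‖ / (κ⁻¹ - μ) = κ / (1 - κ * μ) * ‖y - f x‖ := by
      have hkey : κ⁻¹ - μ = (1 - κ * μ)/κ := by field_simp
      rw [hkey, div_div_eq_mul_div]
      ring
    linarith [hlim, heq.le, heq.ge]
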